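/- Let G be a tree with ℓ leaves, ℓ ≥ 2. Then the number of edges of G both of whose endpoints are internal (non-leaf) vertices is at most |V(G)| - ℓ - 1, and in particular the number of internal vertices is at most 2·vc(G), where vc(G) is the vertex cover number of G. -/

import Mathlib

open SimpleGraph Finset

/-- For adjacent `v, c`, both different from the root `r`, in a tree either `c` is the
second vertex of the unique path from `v` to `r`, or vice versa. -/
lemma tree_par_swap {V : Type*} [DecidableEq V] {G : SimpleGraph V} (r : V)
    (P : ∀ v : V, G.Walk v r) (hP : ∀ v, (P v).IsPath)
    (hPu : ∀ v (q : G.Walk v r), q.IsPath → q = P v)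
    {v c : V} (hadj : G.Adj v c) :
    (P v).getVert 1 = c ∨ (P c).getVert 1 = v := by
  by_cases hc : c ∈ (P v).support
  · left
    have hdrop : ((P v).dropUntil c hc).IsPath := (hP v).dropUntil hc
    have hvni : v ∉ ((P v).dropUntil c hc).support := by
      intro hmem
      have hnodup := (hP v).support_nodup
      rw [← (P v).take_spec hc, Walk.support_append] at hnodup
      have hdis := List.disjoint_of_nodup_append hnodup
      have hv1 : v ∈ ((P v).takeUntil c hc).support := Walk.start_mem_support _
      have hv2 : v ∈ ((P v).dropUntil c hc).support.tail := by
        rw [Walk.support_eq_cons] at hmem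
        rcases List.mem_cons.mp hmem with h | h
        · exact absurd h hadj.ne
        · exact h
      exact hdis hv1 hv2
    have hq : (Walk.cons hadj ((P v).dropUntil c hc)).IsPath := hdrop.cons hvni
    have heq := hPu v _ hq
    rw [← heq]
    exact (Walk.getVert_cons_succ (n := 0) _ hadj).trans (Walk.getVert_zero _)
  · right
    have hq : (Walk.cons hadj.symm (P v)).IsPath := (hP v).cons hc
    have heq := hPu c _ hq
    rw [← heq]
    exact (Walk.getVert_cons_succ (n := 0) _ hadj.symm).trans (Walk.getVert_zero _)

lemma tree_par_adj_root {V : Type*} {G : SimpleGraph V} (r : V)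
    (P : ∀ v : V, G.Walk v r)
    (hPu : ∀ v (q : G.Walk v r), q.IsPath → q = P v)
    {v : V} (hadj : G.Adj v r) : (P v).getVert 1 = r := by
  have hq : (Walk.cons hadj Walk.nil).IsPath := by simp [Walk.cons_isPath_iff, hadj.ne]
  have heq := hPu v _ hq
  rw [← heq]
  exact (Walk.getVert_cons_succ (n := 0) _ hadj).trans (Walk.getVert_zero _)

/-- The vertex cover number of a finite graph. -/
noncomputable def vcNum {V : Type*} [Fintype V] (G : SimpleGraph V) : ℕ :=
  sInf {n : ℕ | ∃ S : Finset V, (∀ e ∈ G.edgeSet, ∃ x ∈ S, x ∈ e) ∧ S.card = n}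

/-- in a finite tree `G` with `ℓ ≥ 2` leaves, the number of internal edges (both
endpoints of degree ≥ 2) is at most `|V(G)| - ℓ - 1`, and the number of internal vertices is
at most twice the vertex cover number of `G`. -/
theorem tree_internal_edges_and_vertices {V : Type*} [Fintype V] [DecidableEq V]
    (G : SimpleGraph V) [DecidableRel G.Adj] (hT : G.IsTree)
    (hl : 2 ≤ (Finset.univ.filter fun v => G.degree v = 1).card) :
    {e ∈ G.edgeSet | ∀ x, x ∈ e → 2 ≤ G.degree x}.ncard ≤
        Fintype.card V - (Finset.univ.filter fun v => G.degree v = 1).card - 1 ∧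
      {v : V | 2 ≤ G.degree v}.ncard ≤ 2 * vcNum G := by
  classical
  have hbig : ∀ v : V, 2 ≤ G.degree v → 3 ≤ Fintype.card V := by
    intro v hv
    have h2 : (insert v (G.neighborFinset v)).card = G.degree v + 1 := by
      rw [Finset.card_insert_of_notMem (G.notMem_neighborFinset_self v)]
      rfl
    have h3 := Finset.card_le_card (Finset.subset_univ (insert v (G.neighborFinset v)))
    rw [Finset.card_univ] at h3
    omega
  constructor
  · -- Part 1: internal edges
    set L := (Finset.univ.filter fun v => G.degree v = 1) with hL
    set A := G.edgeFinset.filter (fun e => ∀ x ∈ e, 2 ≤ G.degree x) with hA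
    have hset : {e ∈ G.edgeSet | ∀ x, x ∈ e → 2 ≤ G.degree x} = ↑A := by
      ext e
      simp [hA, SimpleGraph.mem_edgeFinset]
    rw [hset, Set.ncard_coe_finset]
    rcases Finset.eq_empty_or_nonempty A with hAe | ⟨e0, he0⟩
    · simp [hAe]
    · have h3 : 3 ≤ Fintype.card V := by
        rw [hA, Finset.mem_filter] at he0
        exact hbig _ (he0.2 _ (Sym2.out_fst_mem e0))
      have hnb : ∀ v ∈ L, ∃ u, G.neighborFinset v = {u} := by
        intro v hv
        rw [hL, Finset.mem_filter] at hv
        exact Finset.card_eq_one.mp (by rw [SimpleGraph.card_neighborFinset_eq_degree]; exact hv.2)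
      set nbf : V → V := fun v => if h : ∃ u, G.neighborFinset v = {u} then h.choose else v
        with hnbf
      have hnbf_spec : ∀ v ∈ L, G.neighborFinset v = {nbf v} := by
        intro v hv
        have h := hnb v hv
        simp only [hnbf, dif_pos h]
        exact h.choose_spec
      set f : V → Sym2 V := fun v => s(v, nbf v) with hf
      have hadjf : ∀ v ∈ L, G.Adj v (nbf v) := by
        intro v hv
        rw [← SimpleGraph.mem_neighborFinset, hnbf_spec v hv]
        exact Finset.mem_singleton_self _
      have hmapsTo : ∀ v ∈ L, f v ∈ G.edgeFinset \ A := by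
        intro v hv
        rw [Finset.mem_sdiff]
        refine ⟨by rw [SimpleGraph.mem_edgeFinset]; exact hadjf v hv, ?_⟩
        rw [hA, Finset.mem_filter]
        rintro ⟨-, h2⟩
        have hd := h2 v (by simp [hf])
        have hv1 : G.degree v = 1 := (Finset.mem_filter.mp hv).2
        omega
      have hinj : Set.InjOn f ↑L := by
        intro v hv v' hv' heq
        have hvL : v ∈ L := hv
        have hv'L : v' ∈ L := hv'
        simp only [hf, Sym2.eq_iff] at heq
        rcases heq with ⟨h1, -⟩ | ⟨h1, h2⟩
        · exact h1
        · by_cases hvv : v = v'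
          · exact hvv
          exfalso
          have hnbrv : G.neighborFinset v = {v'} := by rw [hnbf_spec v hvL, h2]
          have hnbrv' : G.neighborFinset v' = {v} := by rw [hnbf_spec v' hv'L, ← h1]
          have key : ∀ a b : V, G.Walk a b → (a = v ∨ a = v') → (b = v ∨ b = v') := by
            intro a b p
            induction p with
            | nil => exact id
            | @cons a x b h q ih =>
              rintro (rfl | rfl)
              · have hx : x ∈ G.neighborFinset a := by
                  rw [SimpleGraph.mem_neighborFinset]; exact h
                rw [hnbrv, Finset.mem_singleton] at hx
                exact ih (Or.inr hx)
              · have hx : x ∈ G.neighborFinset a := by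
                  rw [SimpleGraph.mem_neighborFinset]; exact h
                rw [hnbrv', Finset.mem_singleton] at hx
                exact ih (Or.inl hx)
          obtain ⟨w, hw⟩ : ∃ w : V, w ∉ ({v, v'} : Finset V) := by
            by_contra hall
            push_neg at hall
            have hsub : (Finset.univ : Finset V) ⊆ {v, v'} := fun x _ => hall x
            have h4 := Finset.card_le_card hsub
            have h5 : ({v, v'} : Finset V).card ≤ 2 :=
              (Finset.card_insert_le _ _).trans (by simp)
            rw [Finset.card_univ] at h4
            omega
          obtain ⟨p⟩ := hT.isConnected.preconnected v w
          have hw2 := key v w p (Or.inl rfl)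
          simp only [Finset.mem_insert, Finset.mem_singleton] at hw
          tauto
      have hcount := Finset.card_le_card_of_injOn f hmapsTo hinj
      have hsub : A ⊆ G.edgeFinset := Finset.filter_subset _ _
      have h1 : (G.edgeFinset \ A).card = G.edgeFinset.card - A.card := Finset.card_sdiff_of_subset hsub
      have h2 : A.card ≤ G.edgeFinset.card := Finset.card_le_card hsub
      have h3' := hT.card_edgeFinset
      omega
  · -- Part 2: internal vertices
    set I := Finset.univ.filter (fun v => 2 ≤ G.degree v) with hI
    have hset : {v : V | 2 ≤ G.degree v} = ↑I := by
      ext v; simp [hI]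
    rw [hset, Set.ncard_coe_finset]
    rcases Finset.eq_empty_or_nonempty I with hIe | ⟨v0, hv0⟩
    · simp [hIe]
    have hv0d : 2 ≤ G.degree v0 := (Finset.mem_filter.mp hv0).2
    have hne : {n : ℕ | ∃ S : Finset V, (∀ e ∈ G.edgeSet, ∃ x ∈ S, x ∈ e) ∧ S.card = n}.Nonempty := by
      refine ⟨(Finset.univ : Finset V).card, Finset.univ, fun e _ => ?_, rfl⟩
      exact ⟨e.out.1, Finset.mem_univ _, Sym2.out_fst_mem e⟩
    obtain ⟨Y, hYcov, hYcard⟩ := Nat.sInf_mem hne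
    have hvc : Y.card = vcNum G := hYcard
    obtain ⟨u0, hu0⟩ := (G.degree_pos_iff_exists_adj v0).mp (by omega)
    obtain ⟨r, hrY, -⟩ := hYcov (s(v0, u0)) (by rwa [SimpleGraph.mem_edgeSet])
    choose P hP hPu using fun v => hT.existsUnique_path v r
    set g : V → V := fun v =>
      if h : ((G.neighborFinset v).erase ((P v).getVert 1)).Nonempty then h.choose else v with hg
    have hgspec : ∀ v, 2 ≤ G.degree v → g v ∈ (G.neighborFinset v).erase ((P v).getVert 1) := by
      intro v hv
      have hne2 : ((G.neighborFinset v).erase ((P v).getVert 1)).Nonempty := by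
        rw [← Finset.card_pos]
        have h := Finset.pred_card_le_card_erase
          (s := G.neighborFinset v) (a := (P v).getVert 1)
        have hd : (G.neighborFinset v).card = G.degree v := rfl
        omega
      simp only [hg, dif_pos hne2]
      exact hne2.choose_spec
    have hkey : ∀ v ∈ I \ Y, g v ∈ Y ∧ (P (g v)).getVert 1 = v := by
      intro v hv
      rw [Finset.mem_sdiff, hI, Finset.mem_filter] at hv
      obtain ⟨⟨-, hvd⟩, hvY⟩ := hv
      have hgs := hgspec v hvd
      rw [Finset.mem_erase, SimpleGraph.mem_neighborFinset] at hgs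
      obtain ⟨hgne, hgadj⟩ := hgs
      have hgY : g v ∈ Y := by
        obtain ⟨x, hxY, hxe⟩ := hYcov (s(v, g v)) (by rwa [SimpleGraph.mem_edgeSet])
        rcases Sym2.mem_iff.mp hxe with rfl | rfl
        · exact absurd hxY hvY
        · exact hxY
      refine ⟨hgY, ?_⟩
      have hgr : g v ≠ r := by
        intro hEq
        rw [hEq] at hgadj
        exact hgne (hEq.trans (tree_par_adj_root r P hPu hgadj).symm)
      rcases tree_par_swap r P hP hPu hgadj with h | h
      · exact absurd h.symm hgne
      · exact h
    have hinj2 : Set.InjOn g ↑(I \ Y) := by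
      intro a ha b hb heq
      have h1 := (hkey a ha).2
      have h2 := (hkey b hb).2
      rw [heq] at h1
      exact h1.symm.trans h2
    have hc1 : (I \ Y).card ≤ Y.card :=
      Finset.card_le_card_of_injOn g (fun v hv => (hkey v hv).1) hinj2
    have hc2 : (I ∩ Y).card + (I \ Y).card = I.card := Finset.card_inter_add_card_sdiff I Y
    have hc3 : (I ∩ Y).card ≤ Y.card := Finset.card_le_card Finset.inter_subset_right
    omega
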